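/- Under the hypotheses of the convex case of the accelerated inexact gradient theorem (α_k λ_k ≤ β_k < 1/L, {α_k/(λ_k Γ_k)} non-increasing), for any N ≥ 1, min_{k=1,…,N} ‖∇ℓ(θ_k^{md}) + ε_k‖² ≤ 2 [ ‖θ* − θ_0‖²/(2λ_1) + Σ_{k=1}^{N} Γ_k^{-1}( β_k‖ε_k‖‖∇ℓ(θ_k^{md}) + ε_k‖ + α_k‖ε_k‖‖θ_{k-1} − θ*‖ ) ] / Σ_{k=1}^{N} Γ_k^{-1} β_k (1 − Lβ_k). -/

import Mathlib

open Set
open scoped RealInnerProductSpace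

variable {E : Type*} [NormedAddCommGroup E] [InnerProductSpace ℝ E] [CompleteSpace E]

lemma aig_line_deriv (f : E → ℝ) (Gf : E → E) (hgrad : ∀ z, HasGradientAt f (Gf z) z)
    (x v : E) (t : ℝ) :
    HasDerivAt (fun s : ℝ => f (x + s • v)) ⟪Gf (x + t • v), v⟫ t := by
  have hc : HasDerivAt (fun s : ℝ => x + s • v) v t := by
    simpa using ((hasDerivAt_id t).smul_const v).const_add x
  have h := (hgrad (x + t • v)).hasFDerivAt.comp_hasDerivAt t hc
  simpa [InnerProductSpace.toDual_apply_apply, Function.comp_def] using h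

lemma aig_convex_lb (f : E → ℝ) (Gf : E → E) (hgrad : ∀ z, HasGradientAt f (Gf z) z)
    (hconv : ConvexOn ℝ Set.univ f) (x y : E) :
    f x + ⟪Gf x, y - x⟫ ≤ f y := by
  have hφconv : ConvexOn ℝ Set.univ (fun t : ℝ => f (x + t • (y - x))) := by
    have h := hconv.comp_affineMap (AffineMap.lineMap x y : ℝ →ᵃ[ℝ] E)
    simp only [Set.preimage_univ] at h
    have he : (f ∘ (AffineMap.lineMap x y : ℝ →ᵃ[ℝ] E)) = fun t : ℝ => f (x + t • (y - x)) := by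
      funext t
      simp only [Function.comp_apply, AffineMap.lineMap_apply, vsub_eq_sub, vadd_eq_add]
      rw [add_comm]
    rwa [he] at h
  have hder : HasDerivAt (fun t : ℝ => f (x + t • (y - x))) ⟪Gf x, y - x⟫ 0 := by
    have := aig_line_deriv f Gf hgrad x (y - x) 0
    simpa using this
  have := hφconv.le_slope_of_hasDerivAt (mem_univ (0:ℝ)) (mem_univ (1:ℝ)) zero_lt_one hder
  rw [slope_def_field] at this
  simp at this
  linarith

lemma aig_descent (f : E → ℝ) (Gf : E → E) (L : ℝ)
    (hgrad : ∀ z, HasGradientAt f (Gf z) z)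
    (hLip : ∀ a b, ‖Gf a - Gf b‖ ≤ L * ‖a - b‖) (x y : E) :
    f y ≤ f x + ⟪Gf x, y - x⟫ + L / 2 * ‖y - x‖ ^ 2 := by
  set v := y - x with hv
  set ψ : ℝ → ℝ := fun t => f (x + t • v) - t * ⟪Gf x, v⟫ - L / 2 * ‖v‖ ^ 2 * t ^ 2 with hψ
  have hψd : ∀ t : ℝ, HasDerivAt ψ
      (⟪Gf (x + t • v), v⟫ - ⟪Gf x, v⟫ - L * ‖v‖ ^ 2 * t) t := by
    intro t
    have h1 := aig_line_deriv f Gf hgrad x v t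
    have h2 : HasDerivAt (fun s : ℝ => s * ⟪Gf x, v⟫) ⟪Gf x, v⟫ t := by
      simpa using (hasDerivAt_id t).mul_const ⟪Gf x, v⟫
    have h3 : HasDerivAt (fun s : ℝ => L / 2 * ‖v‖ ^ 2 * s ^ 2)
        (L / 2 * ‖v‖ ^ 2 * (2 * t)) t := by
      simpa using (hasDerivAt_pow 2 t).const_mul (L / 2 * ‖v‖ ^ 2)
    have := (h1.sub h2).sub h3
    rw [show L / 2 * ‖v‖ ^ 2 * (2 * t) = L * ‖v‖ ^ 2 * t by ring] at this
    exact this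
  have hanti : AntitoneOn ψ (Icc (0:ℝ) 1) := by
    apply antitoneOn_of_deriv_nonpos (convex_Icc 0 1)
    · exact (Differentiable.continuous fun t => (hψd t).differentiableAt).continuousOn
    · exact fun t _ => (hψd t).differentiableAt.differentiableWithinAt
    · intro t ht
      rw [interior_Icc] at ht
      rw [(hψd t).deriv]
      have hCS := real_inner_le_norm (Gf (x + t • v) - Gf x) v
      have hlip := hLip (x + t • v) x
      have heq : ‖x + t • v - x‖ = t * ‖v‖ := by
        rw [add_sub_cancel_left, norm_smul, Real.norm_eq_abs, abs_of_pos ht.1]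
      rw [heq] at hlip
      rw [inner_sub_left] at hCS
      nlinarith [norm_nonneg v, norm_nonneg (Gf (x + t • v) - Gf x), ht.1.le]
  have h01 := hanti (Set.left_mem_Icc.2 zero_le_one) (Set.right_mem_Icc.2 zero_le_one) zero_le_one
  simp only [hψ] at h01
  have e1 : x + (1:ℝ) • v = y := by rw [hv]; simp
  have e0 : x + (0:ℝ) • v = x := by simp
  rw [e1, e0] at h01
  simp at h01
  linarith

set_option maxHeartbeats 1600000 in
/-- Convex case, gradient-norm bound: under the hypotheses of the convex accelerated
inexact gradient theorem, `min_{k≤N} ‖∇ℓ(θ_k^{md})+ε_k‖²` is bounded by the stated ratio. -/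
theorem stmt_14 {d : ℕ}
    (ℓ : EuclideanSpace ℝ (Fin d) → ℝ)
    (G : EuclideanSpace ℝ (Fin d) → EuclideanSpace ℝ (Fin d))
    (L : ℝ) (hL : 0 < L)
    (hgrad : ∀ θ, HasGradientAt ℓ (G θ) θ)
    (hLip : ∀ θ ϑ, ‖G θ - G ϑ‖ ≤ L * ‖θ - ϑ‖)
    (hconv : ConvexOn ℝ Set.univ ℓ)
    (θstar : EuclideanSpace ℝ (Fin d))
    (hopt : ∀ θ, ℓ θstar ≤ ℓ θ)
    (α Γ lam β : ℕ → ℝ)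
    (hα1 : α 1 = 1)
    (hα : ∀ k, 2 ≤ k → α k ∈ Set.Ioo (0 : ℝ) 1)
    (hΓ1 : Γ 1 = 1)
    (hΓ : ∀ k, 2 ≤ k → Γ k = (1 - α k) * Γ (k - 1))
    (hlam : ∀ k, 1 ≤ k → 0 < lam k)
    (hβpos : ∀ k, 1 ≤ k → 0 < β k)
    (hstep : ∀ k, 1 ≤ k → α k * lam k ≤ β k ∧ β k < 1 / L)
    (hmono : ∀ k, 1 ≤ k → α (k + 1) / (lam (k + 1) * Γ (k + 1)) ≤ α k / (lam k * Γ k))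
    (θ θag θmd ε : ℕ → EuclideanSpace ℝ (Fin d))
    (h0 : θag 0 = θ 0)
    (hmd : ∀ k, 1 ≤ k → θmd k = (1 - α k) • θag (k - 1) + α k • θ (k - 1))
    (hθ : ∀ k, 1 ≤ k → θ k = θ (k - 1) - lam k • (G (θmd k) + ε k))
    (hag : ∀ k, 1 ≤ k → θag k = θmd k - β k • (G (θmd k) + ε k)) :
    ∀ N : ℕ, 1 ≤ N →
      ∃ k ∈ Finset.Icc 1 N,
        ‖G (θmd k) + ε k‖ ^ 2
          ≤ 2 * (‖θstar - θ 0‖ ^ 2 / (2 * lam 1)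
              + ∑ j ∈ Finset.Icc 1 N, (Γ j)⁻¹ *
                  (β j * ‖ε j‖ * ‖G (θmd j) + ε j‖
                    + α j * ‖ε j‖ * ‖θ (j - 1) - θstar‖))
            / ∑ j ∈ Finset.Icc 1 N, (Γ j)⁻¹ * (β j * (1 - L * β j)) := by
  -- basic positivity facts
  have hαb : ∀ k, 1 ≤ k → 0 < α k ∧ α k ≤ 1 := by
    intro k hk
    rcases eq_or_lt_of_le hk with h | h
    · rw [← h]; simp [hα1]
    · have h2 : 2 ≤ k := by omega
      exact ⟨(hα k h2).1, (hα k h2).2.le⟩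
  have hΓpos : ∀ k, 1 ≤ k → 0 < Γ k := by
    intro k hk
    induction k, hk using Nat.le_induction with
    | base => simp [hΓ1]
    | succ n hn ih =>
      have h2 : 2 ≤ n + 1 := by omega
      rw [hΓ (n + 1) h2]
      simp only [Nat.add_sub_cancel]
      exact mul_pos (by linarith [(hα (n + 1) h2).2]) ih
  have hLβ : ∀ k, 1 ≤ k → 0 < 1 - L * β k := by
    intro k hk
    have := (hstep k hk).2
    rw [lt_div_iff₀ hL] at this
    linarith
  -- key per-step inequality
  have key : ∀ k, 1 ≤ k →
      2 * (Γ k)⁻¹ * (ℓ (θag k) - ℓ θstar)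
        + α k / (lam k * Γ k) * ‖θ k - θstar‖ ^ 2
        + (Γ k)⁻¹ * (β k * (1 - L * β k)) * ‖G (θmd k) + ε k‖ ^ 2
      ≤ 2 * (1 - α k) * (Γ k)⁻¹ * (ℓ (θag (k - 1)) - ℓ θstar)
        + α k / (lam k * Γ k) * ‖θ (k - 1) - θstar‖ ^ 2
        + 2 * ((Γ k)⁻¹ * (β k * ‖ε k‖ * ‖G (θmd k) + ε k‖
            + α k * ‖ε k‖ * ‖θ (k - 1) - θstar‖)) := by
    intro k hk
    obtain ⟨ha0, ha1⟩ := hαb k hk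
    have hl := hlam k hk
    have hb := hβpos k hk
    have hΓk := hΓpos k hk
    have hΓinv : (0:ℝ) < (Γ k)⁻¹ := inv_pos.2 hΓk
    -- F1 : descent step
    have hd : θag k - θmd k = -(β k • (G (θmd k) + ε k)) := by rw [hag k hk]; abel
    have F1' := aig_descent ℓ G L hgrad hLip (θmd k) (θag k)
    rw [hd] at F1'
    have hGm : G (θmd k) = (G (θmd k) + ε k) - ε k := by abel
    have hip : ⟪G (θmd k), G (θmd k) + ε k⟫
        = ‖G (θmd k) + ε k‖ ^ 2 - ⟪ε k, G (θmd k) + ε k⟫ := by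
      nth_rewrite 1 [hGm]
      rw [inner_sub_left, real_inner_self_eq_norm_sq]
    have e1 : ⟪G (θmd k), -(β k • (G (θmd k) + ε k))⟫
        = -(β k * (‖G (θmd k) + ε k‖ ^ 2 - ⟪ε k, G (θmd k) + ε k⟫)) := by
      rw [inner_neg_right, real_inner_smul_right, hip]
    have e2 : ‖-(β k • (G (θmd k) + ε k))‖ ^ 2 = β k ^ 2 * ‖G (θmd k) + ε k‖ ^ 2 := by
      rw [norm_neg, norm_smul, Real.norm_eq_abs, mul_pow, sq_abs]
    rw [e1, e2] at F1'
    -- F2 : convexity step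
    have c1 := aig_convex_lb ℓ G hgrad hconv (θmd k) (θag (k - 1))
    have c2 := aig_convex_lb ℓ G hgrad hconv (θmd k) θstar
    have hv : (1 - α k) • (θag (k - 1) - θmd k) + α k • (θstar - θmd k)
        = α k • (θstar - θ (k - 1)) := by
      rw [hmd k hk]; module
    have hin : (1 - α k) * ⟪G (θmd k), θag (k - 1) - θmd k⟫
        + α k * ⟪G (θmd k), θstar - θmd k⟫
        = α k * ⟪G (θmd k), θstar - θ (k - 1)⟫ := by
      rw [← real_inner_smul_right, ← real_inner_smul_right, ← inner_add_right, hv,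
        real_inner_smul_right]
    have hneg : ⟪G (θmd k), θstar - θ (k - 1)⟫ = -⟪G (θmd k), θ (k - 1) - θstar⟫ := by
      rw [show θstar - θ (k - 1) = -(θ (k - 1) - θstar) from by abel, inner_neg_right]
    rw [hneg] at hin
    have m1 := mul_le_mul_of_nonneg_left c1 (by linarith : (0:ℝ) ≤ 1 - α k)
    have m2 := mul_le_mul_of_nonneg_left c2 ha0.le
    have F2 : ℓ (θmd k) ≤ (1 - α k) * ℓ (θag (k - 1)) + α k * ℓ θstar
        + α k * ⟪G (θmd k), θ (k - 1) - θstar⟫ := by linarith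
    -- F3 : split the gradient inner product
    have F3 : ⟪G (θmd k), θ (k - 1) - θstar⟫
        = ⟪G (θmd k) + ε k, θ (k - 1) - θstar⟫ - ⟪ε k, θ (k - 1) - θstar⟫ := by
      nth_rewrite 1 [hGm]
      rw [inner_sub_left]
    -- F4 : the distance identity
    have hsub : θ k - θstar = (θ (k - 1) - θstar) - lam k • (G (θmd k) + ε k) := by
      rw [hθ k hk]; abel
    have hsm : ⟪θ (k - 1) - θstar, lam k • (G (θmd k) + ε k)⟫
        = lam k * ⟪G (θmd k) + ε k, θ (k - 1) - θstar⟫ := by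
      rw [real_inner_smul_right, real_inner_comm]
    have F4 : ‖θ k - θstar‖ ^ 2 = ‖θ (k - 1) - θstar‖ ^ 2
        - 2 * (lam k * ⟪G (θmd k) + ε k, θ (k - 1) - θstar⟫)
        + lam k ^ 2 * ‖G (θmd k) + ε k‖ ^ 2 := by
      rw [hsub, norm_sub_sq_real, hsm, norm_smul, Real.norm_eq_abs, mul_pow, sq_abs]
    -- Cauchy-Schwarz bounds
    have F5 : ⟪ε k, G (θmd k) + ε k⟫ ≤ ‖ε k‖ * ‖G (θmd k) + ε k‖ :=
      real_inner_le_norm _ _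
    have F6 : -⟪ε k, θ (k - 1) - θstar⟫ ≤ ‖ε k‖ * ‖θ (k - 1) - θstar‖ := by
      have h1 := abs_real_inner_le_norm (ε k) (θ (k - 1) - θstar)
      have h2 := neg_abs_le ⟪ε k, θ (k - 1) - θstar⟫
      linarith
    -- combined one-step inequality
    have S1 : ℓ (θag k) ≤ (1 - α k) * ℓ (θag (k - 1)) + α k * ℓ θstar
        + α k * ⟪G (θmd k) + ε k, θ (k - 1) - θstar⟫
        - α k * ⟪ε k, θ (k - 1) - θstar⟫
        - β k * ‖G (θmd k) + ε k‖ ^ 2 + β k * ⟪ε k, G (θmd k) + ε k⟫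
        + L * β k ^ 2 / 2 * ‖G (θmd k) + ε k‖ ^ 2 := by
      rw [F3] at F2
      nlinarith [F1', F2]
    have hiΓ : (0:ℝ) ≤ 2 * (Γ k)⁻¹ := by positivity
    have S2 := mul_le_mul_of_nonneg_left S1 hiΓ
    -- field identities
    have e3 : α k / (lam k * Γ k) * lam k = α k * (Γ k)⁻¹ := by
      field_simp
    have e4 : α k / (lam k * Γ k) * lam k ^ 2 = (Γ k)⁻¹ * (α k * lam k) := by
      field_simp
    have hE : 2 * ((Γ k)⁻¹ * (α k * ⟪G (θmd k) + ε k, θ (k - 1) - θstar⟫))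
        = α k / (lam k * Γ k) * (‖θ (k - 1) - θstar‖ ^ 2 - ‖θ k - θstar‖ ^ 2
          + lam k ^ 2 * ‖G (θmd k) + ε k‖ ^ 2) := by
      have h2lt : 2 * (lam k * ⟪G (θmd k) + ε k, θ (k - 1) - θstar⟫)
          = ‖θ (k - 1) - θstar‖ ^ 2 - ‖θ k - θstar‖ ^ 2
            + lam k ^ 2 * ‖G (θmd k) + ε k‖ ^ 2 := by linarith
      rw [← h2lt]
      linear_combination (-(2 * ⟪G (θmd k) + ε k, θ (k - 1) - θstar⟫)) * e3
    have hb1 : 2 * (Γ k)⁻¹ * (β k * ⟪ε k, G (θmd k) + ε k⟫)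
        ≤ 2 * (Γ k)⁻¹ * (β k * (‖ε k‖ * ‖G (θmd k) + ε k‖)) :=
      mul_le_mul_of_nonneg_left (mul_le_mul_of_nonneg_left F5 hb.le) hiΓ
    have hb2 : 2 * (Γ k)⁻¹ * (α k * -⟪ε k, θ (k - 1) - θstar⟫)
        ≤ 2 * (Γ k)⁻¹ * (α k * (‖ε k‖ * ‖θ (k - 1) - θstar‖)) :=
      mul_le_mul_of_nonneg_left (mul_le_mul_of_nonneg_left F6 ha0.le) hiΓ
    have hb3 : α k / (lam k * Γ k) * lam k ^ 2 * ‖G (θmd k) + ε k‖ ^ 2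
        ≤ (Γ k)⁻¹ * β k * ‖G (θmd k) + ε k‖ ^ 2 := by
      rw [e4]
      have h1 : (Γ k)⁻¹ * (α k * lam k) ≤ (Γ k)⁻¹ * β k :=
        mul_le_mul_of_nonneg_left (hstep k hk).1 hΓinv.le
      exact mul_le_mul_of_nonneg_right h1 (sq_nonneg _)
    nlinarith [S2, hE, hb1, hb2, hb3]
  -- telescoping
  have claim : ∀ N, 1 ≤ N →
      2 * (Γ N)⁻¹ * (ℓ (θag N) - ℓ θstar)
        + α N / (lam N * Γ N) * ‖θ N - θstar‖ ^ 2
        + ∑ j ∈ Finset.Icc 1 N, (Γ j)⁻¹ * (β j * (1 - L * β j)) * ‖G (θmd j) + ε j‖ ^ 2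
      ≤ α 1 / (lam 1 * Γ 1) * ‖θ 0 - θstar‖ ^ 2
        + 2 * ∑ j ∈ Finset.Icc 1 N, (Γ j)⁻¹ *
            (β j * ‖ε j‖ * ‖G (θmd j) + ε j‖ + α j * ‖ε j‖ * ‖θ (j - 1) - θstar‖) := by
    intro N hN
    induction N, hN using Nat.le_induction with
    | base =>
      have h := key 1 le_rfl
      simp only [Finset.Icc_self, Finset.sum_singleton]
      simp only [hα1, hΓ1] at h ⊢
      norm_num at h ⊢
      linarith
    | succ n hn ih =>
      have h := key (n + 1) (by omega)
      rw [Finset.sum_Icc_succ_top (by omega : 1 ≤ n + 1),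
        Finset.sum_Icc_succ_top (by omega : 1 ≤ n + 1)]
      simp only [Nat.add_sub_cancel] at h ⊢
      have h2 : 2 ≤ n + 1 := by omega
      have hγ : Γ (n + 1) = (1 - α (n + 1)) * Γ n := by
        rw [hΓ (n + 1) h2]; norm_num
      have hα' := hα (n + 1) h2
      have hane : (1 : ℝ) - α (n + 1) ≠ 0 := by
        have := hα'.2; intro hcon; linarith [sub_eq_zero.mp hcon]
      have hΓn := (hΓpos n hn).ne'
      have hcoef : (1 - α (n + 1)) * (Γ (n + 1))⁻¹ = (Γ n)⁻¹ := by
        rw [hγ, mul_inv]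
        field_simp
      have hmon := hmono n hn
      have hmonQ := mul_le_mul_of_nonneg_right hmon (sq_nonneg ‖θ n - θstar‖)
      have hcoef2 : 2 * (1 - α (n + 1)) * (Γ (n + 1))⁻¹ * (ℓ (θag n) - ℓ θstar)
          = 2 * (Γ n)⁻¹ * (ℓ (θag n) - ℓ θstar) := by
        linear_combination (2 * (ℓ (θag n) - ℓ θstar)) * hcoef
      linarith
  -- conclusion
  intro N hN
  have hne : (Finset.Icc 1 N).Nonempty := ⟨1, by simp [hN]⟩
  obtain ⟨k0, hk0mem, hk0min⟩ :=
    Finset.exists_min_image (Finset.Icc 1 N) (fun j => ‖G (θmd j) + ε j‖) hne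
  refine ⟨k0, hk0mem, ?_⟩
  have hterm : ∀ j ∈ Finset.Icc 1 N, (0:ℝ) < (Γ j)⁻¹ * (β j * (1 - L * β j)) := by
    intro j hj
    have hj1 : 1 ≤ j := (Finset.mem_Icc.mp hj).1
    exact mul_pos (inv_pos.2 (hΓpos j hj1)) (mul_pos (hβpos j hj1) (hLβ j hj1))
  have hSpos : 0 < ∑ j ∈ Finset.Icc 1 N, (Γ j)⁻¹ * (β j * (1 - L * β j)) :=
    Finset.sum_pos hterm hne
  have hsum1 : (∑ j ∈ Finset.Icc 1 N, (Γ j)⁻¹ * (β j * (1 - L * β j)))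
      * ‖G (θmd k0) + ε k0‖ ^ 2
      ≤ ∑ j ∈ Finset.Icc 1 N,
          (Γ j)⁻¹ * (β j * (1 - L * β j)) * ‖G (θmd j) + ε j‖ ^ 2 := by
    rw [Finset.sum_mul]
    apply Finset.sum_le_sum
    intro j hj
    have h1 : ‖G (θmd k0) + ε k0‖ ^ 2 ≤ ‖G (θmd j) + ε j‖ ^ 2 :=
      pow_le_pow_left₀ (norm_nonneg _) (hk0min j hj) 2
    exact mul_le_mul_of_nonneg_left h1 (hterm j hj).le
  have hclaim := claim N hN
  have hDN : 0 ≤ 2 * (Γ N)⁻¹ * (ℓ (θag N) - ℓ θstar) := by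
    have := hopt (θag N)
    have h1 : (0:ℝ) ≤ 2 * (Γ N)⁻¹ := by
      have := hΓpos N hN
      positivity
    exact mul_nonneg h1 (by linarith)
  have hcN : 0 ≤ α N / (lam N * Γ N) * ‖θ N - θstar‖ ^ 2 := by
    have h1 : 0 ≤ α N / (lam N * Γ N) := by
      have := (hαb N hN).1
      have := hlam N hN
      have := hΓpos N hN
      positivity
    exact mul_nonneg h1 (sq_nonneg _)
  have hc1 : α 1 / (lam 1 * Γ 1) * ‖θ 0 - θstar‖ ^ 2
      = 2 * (‖θstar - θ 0‖ ^ 2 / (2 * lam 1)) := by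
    rw [hα1, hΓ1, show ‖θstar - θ 0‖ = ‖θ 0 - θstar‖ from norm_sub_rev _ _]
    have := (hlam 1 le_rfl).ne'
    field_simp
  rw [le_div_iff₀ hSpos]
  linarith
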